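/- If the sectional K-curvature is non-positive for every 2-plane of V and [K,K]·K = 0 (each endomorphism [K,K](X,Y) acts as a derivation annihilating K), then the sectional K-curvature vanishes for every 2-plane, i.e. [K,K] = 0. -/

import Mathlib

open RealInnerProductSpace Finset

open RealInnerProductSpace Finset

private lemma npc_Q_nonpos {V : Type*} [NormedAddCommGroup V] [InnerProductSpace ℝ V]
    (K : V →ₗ[ℝ] V →ₗ[ℝ] V)
    (hsymm : ∀ X Y : V, K X Y = K Y X)
    (hnonpos : ∀ X Y : V, ‖X‖ = 1 → ‖Y‖ = 1 → ⟪X, Y⟫ = 0 →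
      ⟪K X X, K Y Y⟫ - ⟪K X Y, K X Y⟫ ≤ 0)
    (X Y : V) : ⟪K X X, K Y Y⟫ - ⟪K X Y, K X Y⟫ ≤ 0 := by
  by_cases hX : X = 0
  · simp [hX]
  set c : ℝ := ⟪X, Y⟫ / (‖X‖ ^ 2) with hc
  set Y' : V := Y - c • X with hY'
  have hnX : ‖X‖ ≠ 0 := norm_ne_zero_iff.mpr hX
  have hXY' : ⟪X, Y'⟫ = 0 := by
    rw [hY', inner_sub_right, real_inner_smul_right, hc, ← real_inner_self_eq_norm_sq]
    have : ⟪X, X⟫ ≠ 0 := by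
      rw [real_inner_self_eq_norm_sq]; positivity
    field_simp
    ring
  have hYY : Y = c • X + Y' := by rw [hY']; abel
  have hreduce : ⟪K X X, K Y Y⟫ - ⟪K X Y, K X Y⟫
      = ⟪K X X, K Y' Y'⟫ - ⟪K X Y', K X Y'⟫ := by
    rw [hYY]
    have h1 : K X (c • X + Y') = c • K X X + K X Y' := by simp
    have h2 : K (c • X + Y') (c • X + Y')
        = (c * c) • K X X + c • K X Y' + (c • K Y' X + K Y' Y') := by
      simp [LinearMap.add_apply, smul_smul]
    rw [h1, h2, hsymm Y' X]
    simp only [inner_add_left, inner_add_right, real_inner_smul_left, real_inner_smul_right]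
    ring_nf
    rw [real_inner_comm (K X Y') (K X X)]
    ring
  rw [hreduce]
  by_cases hY0 : Y' = 0
  · simp [hY0]
  have hnY : ‖Y'‖ ≠ 0 := norm_ne_zero_iff.mpr hY0
  set a : ℝ := ‖X‖⁻¹ with ha
  set b : ℝ := ‖Y'‖⁻¹ with hb
  have hXa : ‖a • X‖ = 1 := by
    rw [norm_smul, ha, Real.norm_eq_abs, abs_of_nonneg (by positivity)]
    field_simp
  have hYb : ‖b • Y'‖ = 1 := by
    rw [norm_smul, hb, Real.norm_eq_abs, abs_of_nonneg (by positivity)]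
    field_simp
  have hortho : ⟪a • X, b • Y'⟫ = 0 := by
    rw [real_inner_smul_left, real_inner_smul_right, hXY']; ring
  have key := hnonpos (a • X) (b • Y') hXa hYb hortho
  have hscale : ⟪K (a • X) (a • X), K (b • Y') (b • Y')⟫
        - ⟪K (a • X) (b • Y'), K (a • X) (b • Y')⟫
      = (a ^ 2 * b ^ 2) * (⟪K X X, K Y' Y'⟫ - ⟪K X Y', K X Y'⟫) := by
    simp only [map_smul, LinearMap.smul_apply, real_inner_smul_left, real_inner_smul_right]
    ring
  have hpos : 0 < a ^ 2 * b ^ 2 := by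
    have : a ≠ 0 := by rw [ha]; exact inv_ne_zero hnX
    have : b ≠ 0 := by rw [hb]; exact inv_ne_zero hnY
    positivity
  nlinarith [key, hscale, hpos]


/-- If the sectional K-curvature is non-positive for every 2-plane and
`[K,K]·K = 0`, then the sectional K-curvature vanishes, i.e. `[K,K] = 0`. -/
theorem nonpositive_curvature_with_bracket_derivation
    {V : Type*} [NormedAddCommGroup V] [InnerProductSpace ℝ V]
    [FiniteDimensional ℝ V]
    (K : V →ₗ[ℝ] V →ₗ[ℝ] V)
    (hsymm : ∀ X Y : V, K X Y = K Y X)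
    (hadj : ∀ X Y Z : V, ⟪K X Y, Z⟫ = ⟪Y, K X Z⟫)
    (hnonpos : ∀ X Y : V, ‖X‖ = 1 → ‖Y‖ = 1 → ⟪X, Y⟫ = 0 →
      ⟪K X X, K Y Y⟫ - ⟪K X Y, K X Y⟫ ≤ 0)
    (hder : ∀ X Y Z W : V,
      K X (K Y (K Z W)) - K Y (K X (K Z W))
        = K (K X (K Y Z) - K Y (K X Z)) W + K Z (K X (K Y W) - K Y (K X W))) :
    ∀ X Y Z : V, K X (K Y Z) = K Y (K X Z) := by
  classical
  -- the commutator operator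
  set Rop : V → V → V →ₗ[ℝ] V := fun A B => K A ∘ₗ K B - K B ∘ₗ K A with hRop
  have hRop_apply : ∀ A B W : V, Rop A B W = K A (K B W) - K B (K A W) := by
    intro A B W; simp [hRop]
  -- skew-adjointness of Rop
  have hskew : ∀ A B u v : V, ⟪Rop A B u, v⟫ = -⟪u, Rop A B v⟫ := by
    intro A B u v
    simp only [hRop_apply, inner_sub_left, inner_sub_right, hadj]
    ring
  -- derivation property, operator form
  have hder_op : ∀ A B Z : V,
      Rop A B ∘ₗ K Z = K (Rop A B Z) + K Z ∘ₗ Rop A B := by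
    intro A B Z
    apply LinearMap.ext
    intro W
    have := hder A B Z W
    simp only [hRop_apply, LinearMap.comp_apply, LinearMap.add_apply, map_sub,
      LinearMap.sub_apply] at this ⊢
    linear_combination (norm := module) this
  -- scalar trace-term identities
  have haux : ∀ u v : V, ⟪K u u, v⟫ = ⟪K v u, u⟫ := by
    intro u v
    rw [hadj u u v, hsymm u v]
    exact real_inner_comm _ _
  have hterm1 : ∀ X W u : V, ⟪K X (K u u), W⟫ = ⟪(K (K X W)) u, u⟫ := by
    intro X W u
    rw [hadj X (K u u) W]
    exact haux u (K X W)
  have hterm2 : ∀ X W u : V, ⟪K u (K X u), W⟫ = ⟪(K X ∘ₗ K W) u, u⟫ := by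
    intro X W u
    rw [hadj u (K X u) W, hsymm u W, hadj X u (K W u), LinearMap.comp_apply]
    exact real_inner_comm _ _
  have hterm : ∀ X W u : V,
      ⟪Rop X u u, W⟫ = ⟪(K (K X W)) u, u⟫ - ⟪(K X ∘ₗ K W) u, u⟫ := by
    intro X W u
    rw [hRop_apply, inner_sub_left, hterm1, hterm2]
  -- trace sums are basis independent
  have hsum_onb : ∀ {m : ℕ} (g h : OrthonormalBasis (Fin m) ℝ V) (T : V →ₗ[ℝ] V),
      ∑ j, ⟪T (g j), g j⟫ = ∑ j, ⟪T (h j), h j⟫ := by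
    intro m g h T
    have expand : ∀ j, ⟪T (g j), g j⟫ = ∑ i, ⟪T (g j), h i⟫ * ⟪h i, g j⟫ :=
      fun j => (h.sum_inner_mul_inner _ _).symm
    rw [Finset.sum_congr rfl fun j _ => expand j, Finset.sum_comm]
    refine Finset.sum_congr rfl fun i _ => ?_
    have h1 : ∀ j, ⟪T (g j), h i⟫ * ⟪h i, g j⟫ = ⟪T (⟪g j, h i⟫ • g j), h i⟫ := by
      intro j
      rw [map_smul, real_inner_smul_left, real_inner_comm (h i) (g j), mul_comm]
    rw [Finset.sum_congr rfl fun j _ => h1 j]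
    rw [← sum_inner, ← map_sum]
    congr 2
    have := g.sum_repr' (h i)
    simpa [real_inner_comm] using this
  -- Ricci operator
  set n := Module.finrank ℝ V with hn
  let b : OrthonormalBasis (Fin n) ℝ V := stdOrthonormalBasis ℝ V
  set Ric : V →ₗ[ℝ] V :=
    ∑ j : Fin n, (K.flip (K (b j) (b j)) - K (b j) ∘ₗ K.flip (b j)) with hRic
  have hRic_apply : ∀ X : V, Ric X = ∑ j, Rop X (b j) (b j) := by
    intro X
    rw [hRic, LinearMap.sum_apply]
    refine Finset.sum_congr rfl fun j _ => ?_
    simp [hRop_apply]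
  -- inner-product formula for Ric, valid in any orthonormal basis
  have hRic_inner : ∀ {m : ℕ} (g : OrthonormalBasis (Fin m) ℝ V),
      (∀ X W : V, ⟪∑ j, Rop X (g j) (g j), W⟫
        = ∑ j, ⟪(K (K X W)) (g j), g j⟫ - ∑ j, ⟪(K X ∘ₗ K W) (g j), g j⟫) := by
    intro m g X W
    rw [sum_inner, ← Finset.sum_sub_distrib]
    exact Finset.sum_congr rfl fun j _ => hterm X W (g j)
  have hRic_sym : Ric.IsSymmetric := by
    intro X W
    rw [hRic_apply, hRic_apply, hRic_inner b X W]
    conv_rhs => rw [real_inner_comm]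
    rw [hRic_inner b W X]
    have e1 : ∀ u : V, ⟪(K (K X W)) u, u⟫ = ⟪(K (K W X)) u, u⟫ := by
      intro u; rw [hsymm X W]
    have e2 : ∀ u : V, ⟪(K X ∘ₗ K W) u, u⟫ = ⟪(K W ∘ₗ K X) u, u⟫ := by
      intro u
      simp only [LinearMap.comp_apply]
      rw [hadj X (K W u) u, real_inner_comm, hadj W (K X u) u]
    rw [Finset.sum_congr rfl fun j _ => e1 (b j), Finset.sum_congr rfl fun j _ => e2 (b j)]
  -- spectral decomposition
  let f : OrthonormalBasis (Fin n) ℝ V := hRic_sym.eigenvectorBasis rfl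
  let μ : Fin n → ℝ := hRic_sym.eigenvalues rfl
  have hf : ∀ i, Ric (f i) = μ i • f i := fun i =>
    hRic_sym.apply_eigenvectorBasis rfl i
  have hfnorm : ∀ i, ‖f i‖ = 1 := fun i => f.orthonormal.1 i
  -- Ric in the eigenbasis
  have hRic_f : ∀ X : V, Ric X = ∑ j, Rop X (f j) (f j) := by
    intro X
    refine ext_inner_right ℝ fun W => ?_
    rw [hRic_apply, hRic_inner b X W, hRic_inner f X W,
      hsum_onb b f (K (K X W)), hsum_onb b f (K X ∘ₗ K W)]
  -- eigenvalues are nonpositive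
  have hμ : ∀ i, μ i ≤ 0 := by
    intro i
    have h1 : μ i = ⟪Ric (f i), f i⟫ := by
      rw [hf i, real_inner_smul_left, real_inner_self_eq_norm_sq, hfnorm i]
      ring
    rw [h1, hRic_f, sum_inner]
    refine Finset.sum_nonpos fun j _ => ?_
    have h2 : ⟪Rop (f i) (f j) (f j), f i⟫
        = ⟪K (f i) (f i), K (f j) (f j)⟫ - ⟪K (f i) (f j), K (f i) (f j)⟫ := by
      rw [hRop_apply, inner_sub_left, hadj (f i) (K (f j) (f j)) (f i),
        real_inner_comm (K (f j) (f j)) (K (f i) (f i)),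
        hadj (f j) (K (f i) (f j)) (f i), hsymm (f j) (f i),
        real_inner_comm (K (f i) (f j)) (K (f i) (f j))]
    rw [h2]
    exact npc_Q_nonpos K hsymm hnonpos (f i) (f j)
  -- trace w.r.t. the eigenbasis: expansion and cyclicity
  have htr_exp : ∀ A B : V →ₗ[ℝ] V, ∑ k, ⟪(A ∘ₗ B) (f k), f k⟫
      = ∑ k, ∑ l, ⟪B (f k), f l⟫ * ⟪A (f l), f k⟫ := by
    intro A B
    refine Finset.sum_congr rfl fun k _ => ?_
    rw [LinearMap.comp_apply]
    conv_lhs => rw [← f.sum_repr' (B (f k))]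
    rw [map_sum, sum_inner]
    refine Finset.sum_congr rfl fun l _ => ?_
    rw [map_smul, real_inner_smul_left, real_inner_comm (f l) (B (f k))]
  have htr_cyc : ∀ A B : V →ₗ[ℝ] V,
      ∑ k, ⟪(A ∘ₗ B) (f k), f k⟫ = ∑ k, ⟪(B ∘ₗ A) (f k), f k⟫ := by
    intro A B
    rw [htr_exp A B, htr_exp B A, Finset.sum_comm]
    exact Finset.sum_congr rfl fun l _ => Finset.sum_congr rfl fun k _ => mul_comm _ _
  -- the key trace identity for each pair (i,j)
  have hstep : ∀ i j, (∑ k, ‖Rop (f i) (f j) (f k)‖ ^ 2)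
      = ∑ k, ⟪(K (Rop (f i) (f j) (f j)) ∘ₗ K (f i)) (f k), f k⟫ := by
    intro i j
    have h1 : ∑ k, ‖Rop (f i) (f j) (f k)‖ ^ 2
        = -∑ k, ⟪(Rop (f i) (f j) ∘ₗ Rop (f i) (f j)) (f k), f k⟫ := by
      rw [← Finset.sum_neg_distrib]
      refine Finset.sum_congr rfl fun k _ => ?_
      rw [LinearMap.comp_apply, hskew (f i) (f j) (Rop (f i) (f j) (f k)) (f k),
        neg_neg, real_inner_self_eq_norm_sq]
    have h2 : ∑ k, ⟪(Rop (f i) (f j) ∘ₗ Rop (f i) (f j)) (f k), f k⟫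
        = ∑ k, ⟪((Rop (f i) (f j) ∘ₗ K (f i)) ∘ₗ K (f j)) (f k), f k⟫
          - ∑ k, ⟪((Rop (f i) (f j) ∘ₗ K (f j)) ∘ₗ K (f i)) (f k), f k⟫ := by
      rw [← Finset.sum_sub_distrib]
      refine Finset.sum_congr rfl fun k _ => ?_
      simp only [LinearMap.comp_apply, hRop_apply, map_sub, inner_sub_left]
      ring
    have h3 := htr_cyc (Rop (f i) (f j) ∘ₗ K (f i)) (K (f j))
    have h4 : ∀ W : V, K (f j) (Rop (f i) (f j) W) - Rop (f i) (f j) (K (f j) W)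
        = -(K (Rop (f i) (f j) (f j)) W) := by
      intro W
      have hd := LinearMap.congr_fun (hder_op (f i) (f j) (f j)) W
      simp only [LinearMap.comp_apply, LinearMap.add_apply] at hd
      rw [hd]
      abel
    have h5 : ∑ k, ⟪(K (f j) ∘ₗ (Rop (f i) (f j) ∘ₗ K (f i))) (f k), f k⟫
        - ∑ k, ⟪((Rop (f i) (f j) ∘ₗ K (f j)) ∘ₗ K (f i)) (f k), f k⟫
        = -∑ k, ⟪(K (Rop (f i) (f j) (f j)) ∘ₗ K (f i)) (f k), f k⟫ := by
      rw [← Finset.sum_sub_distrib, ← Finset.sum_neg_distrib]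
      refine Finset.sum_congr rfl fun k _ => ?_
      simp only [LinearMap.comp_apply]
      rw [← inner_sub_left, h4 (K (f i) (f k)), inner_neg_left]
    rw [h1, h2, h3, h5, neg_neg]
  -- summing everything up
  have hmain : ∑ i, ∑ j, ∑ k, ‖Rop (f i) (f j) (f k)‖ ^ 2
      = ∑ i, μ i * ∑ k, ‖K (f i) (f k)‖ ^ 2 := by
    refine Finset.sum_congr rfl fun i _ => ?_
    rw [Finset.sum_congr rfl fun j _ => hstep i j, Finset.sum_comm]
    have hterm3 : ∀ k, ∑ j, ⟪(K (Rop (f i) (f j) (f j)) ∘ₗ K (f i)) (f k), f k⟫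
        = μ i * ‖K (f i) (f k)‖ ^ 2 := by
      intro k
      simp only [LinearMap.comp_apply]
      have hs : ∑ j, ⟪(K (Rop (f i) (f j) (f j))) (K (f i) (f k)), f k⟫
          = ⟪K (Ric (f i)) (K (f i) (f k)), f k⟫ := by
        rw [hRic_f, map_sum, LinearMap.sum_apply, sum_inner]
      rw [hs, hf i, map_smul, LinearMap.smul_apply, real_inner_smul_left]
      congr 1
      rw [hadj (f i) (K (f i) (f k)) (f k), real_inner_comm,
        real_inner_self_eq_norm_sq]
    rw [Finset.sum_congr rfl fun k _ => hterm3 k, ← Finset.mul_sum]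
  have hnonneg : 0 ≤ ∑ i, ∑ j, ∑ k, ‖Rop (f i) (f j) (f k)‖ ^ 2 :=
    Finset.sum_nonneg fun _ _ => Finset.sum_nonneg fun _ _ =>
      Finset.sum_nonneg fun _ _ => by positivity
  have hnp : ∑ i, μ i * ∑ k, ‖K (f i) (f k)‖ ^ 2 ≤ 0 :=
    Finset.sum_nonpos fun i _ => mul_nonpos_of_nonpos_of_nonneg (hμ i)
      (Finset.sum_nonneg fun _ _ => by positivity)
  have hzero : ∑ i, ∑ j, ∑ k, ‖Rop (f i) (f j) (f k)‖ ^ 2 = 0 :=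
    le_antisymm (le_of_le_of_eq (le_of_eq hmain) (by linarith [hnp, hnonneg, hmain]))
      hnonneg
  have hvanish : ∀ i j k, Rop (f i) (f j) (f k) = 0 := by
    intro i j k
    have e1 := (Finset.sum_eq_zero_iff_of_nonneg (fun i _ =>
      Finset.sum_nonneg fun j _ => Finset.sum_nonneg fun k _ => by positivity)).mp
      hzero i (Finset.mem_univ i)
    have e2 := (Finset.sum_eq_zero_iff_of_nonneg (fun j _ =>
      Finset.sum_nonneg fun k _ => by positivity)).mp e1 j (Finset.mem_univ j)
    have e3 := (Finset.sum_eq_zero_iff_of_nonneg (fun k _ => by positivity)).mp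
      e2 k (Finset.mem_univ k)
    have : ‖Rop (f i) (f j) (f k)‖ = 0 := by
      have := norm_nonneg (Rop (f i) (f j) (f k))
      nlinarith
    exact norm_eq_zero.mp this
  -- propagate from the basis to everything
  have stageA : ∀ i j, K (f i) ∘ₗ K (f j) = K (f j) ∘ₗ K (f i) := by
    intro i j
    refine Module.Basis.ext f.toBasis fun k => ?_
    simp only [OrthonormalBasis.coe_toBasis, LinearMap.comp_apply]
    have := hvanish i j k
    rw [hRop_apply] at this
    exact sub_eq_zero.mp this
  have stageB : ∀ (i : Fin n) (Y : V), K (f i) ∘ₗ K Y = K Y ∘ₗ K (f i) := by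
    intro i Y
    have hB : (LinearMap.llcomp ℝ V V V (K (f i))) ∘ₗ K
        = ((LinearMap.llcomp ℝ V V V).flip (K (f i))) ∘ₗ K := by
      refine Module.Basis.ext f.toBasis fun j => ?_
      simp only [OrthonormalBasis.coe_toBasis, LinearMap.comp_apply]
      refine LinearMap.ext fun w => ?_
      simp only [LinearMap.llcomp_apply, LinearMap.flip_apply]
      exact LinearMap.congr_fun (stageA i j) w
    have hBY := LinearMap.congr_fun hB Y
    simp only [LinearMap.comp_apply] at hBY
    refine LinearMap.ext fun w => ?_
    have := LinearMap.congr_fun hBY w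
    simpa only [LinearMap.llcomp_apply, LinearMap.flip_apply,
      LinearMap.comp_apply] using this
  intro X Y Z
  have stageC : K X ∘ₗ K Y = K Y ∘ₗ K X := by
    have hC : ((LinearMap.llcomp ℝ V V V).flip (K Y)) ∘ₗ K
        = (LinearMap.llcomp ℝ V V V (K Y)) ∘ₗ K := by
      refine Module.Basis.ext f.toBasis fun i => ?_
      simp only [OrthonormalBasis.coe_toBasis, LinearMap.comp_apply]
      refine LinearMap.ext fun w => ?_
      simp only [LinearMap.llcomp_apply, LinearMap.flip_apply]
      exact LinearMap.congr_fun (stageB i Y) w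
    have hCX := LinearMap.congr_fun hC X
    simp only [LinearMap.comp_apply] at hCX
    refine LinearMap.ext fun w => ?_
    have := LinearMap.congr_fun hCX w
    simpa only [LinearMap.llcomp_apply, LinearMap.flip_apply,
      LinearMap.comp_apply] using this
  have := LinearMap.congr_fun stageC Z
  simpa only [LinearMap.comp_apply] using this
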